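/- Let X be a quantum-Wajsberg algebra. (i) For any deductive system F of X, the relation ≡_F is a congruence on X (an equivalence relation such that x ≡_F y and u ≡_F v imply x→u ≡_F y→v), and {x ∈ X | x ≡_F 1} = F. (ii) Conversely, if ≡ is a congruence relation on X, then {x ∈ X | x ≡ 1} is a deductive system of X. -/

import Mathlib

/-- The underlying involutive bounded BE algebra of a quantum-Wajsberg algebra. -/
class PreQW (X : Type*) where
  imp : X → X → X
  zero : X
  one : X
  imp_self : ∀ x : X, imp x x = one
  imp_one : ∀ x : X, imp x one = one
  one_imp : ∀ x : X, imp one x = x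
  exchange : ∀ x y z : X, imp x (imp y z) = imp y (imp x z)
  zero_imp : ∀ x : X, imp zero x = one
  involutive : ∀ x : X, imp (imp x zero) zero = x

namespace PreQW

variable {X : Type*} [PreQW X]

/-- `x* = x → 0`. -/
def qstar (x : X) : X := imp x zero

/-- `x ⊔ y = (x → y) → y`. -/
def qsup (x y : X) : X := imp (imp x y) y

/-- `x ⊓ y = ((x* → y*) → y*)*`. -/
def qinf (x y : X) : X := qstar (imp (imp (qstar x) (qstar y)) (qstar y))

/-- `x ⊙ y = (x → y*)*`. -/
def qprod (x y : X) : X := qstar (imp x (qstar y))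

/-- `x ≤ y` iff `x → y = 1`. -/
def qle (x y : X) : Prop := imp x y = one

/-- `x ≤_Q y` iff `x = x ⊓ y`. -/
def qleQ (x y : X) : Prop := x = qinf x y

/-- `xⁿ = x ⊙ ⋯ ⊙ x` (`n` factors), with `x⁰ = 1`. -/
def qpow (x : X) : ℕ → X
  | 0 => one
  | n + 1 => qprod x (qpow x n)

/-- A filter: nonempty, closed under `⊙`, and `x ∈ F` implies `y → x ∈ F`. -/
def IsFilter (F : Set X) : Prop :=
  F.Nonempty ∧ (∀ x ∈ F, ∀ y ∈ F, qprod x y ∈ F) ∧ (∀ x ∈ F, ∀ y : X, imp y x ∈ F)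

/-- A deductive system: contains `1` and is closed under modus ponens. -/
def IsDS (F : Set X) : Prop :=
  (one : X) ∈ F ∧ ∀ x ∈ F, ∀ y : X, imp x y ∈ F → y ∈ F

/-- A maximal filter: proper and not strictly contained in any proper filter. -/
def IsMaximal (F : Set X) : Prop :=
  IsFilter F ∧ F ≠ Set.univ ∧
    ∀ G : Set X, IsFilter G → F ⊆ G → G ≠ Set.univ → G = F

/-- The strong maximality condition: for every `x ∉ F`, `(xⁿ)* ∈ F` for some `n ≥ 1`. -/
def StrongMaxCond (F : Set X) : Prop :=
  ∀ x : X, x ∉ F → ∃ n : ℕ, 1 ≤ n ∧ qstar (qpow x n) ∈ F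

/-- A strongly maximal filter. -/
def IsStronglyMaximal (F : Set X) : Prop :=
  IsFilter F ∧ StrongMaxCond F

/-- `x ∼ y`: there is `α` with `x ≤ α ≤ x` and `y ≤ α ≤ y`. -/
def Persp (x y : X) : Prop :=
  ∃ α : X, imp x α = one ∧ imp α x = one ∧ imp y α = one ∧ imp α y = one

/-- `x ≡_F y` iff there is `λ` with `x, y ≤_Q λ` and `λ → x, λ → y ∈ F`. -/
def equivF (F : Set X) (x y : X) : Prop :=
  ∃ l : X, qleQ x l ∧ qleQ y l ∧ imp l x ∈ F ∧ imp l y ∈ F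

end PreQW

/-- A quantum-Wajsberg algebra: an involutive BE algebra satisfying axiom (QW). -/
class QW (X : Type*) extends PreQW X where
  qw : ∀ x y z : X,
    imp x (PreQW.qinf (PreQW.qinf x y) (PreQW.qinf z x)) =
      PreQW.qinf (imp x y) (imp x z)


namespace QWAux

variable {X : Type*} [QW X]
open PreQW

lemma contrap (x y : X) : imp x y = imp (imp y zero) (imp x zero) := by
  conv_lhs => rw [← involutive y]
  exact exchange x (imp y zero) zero

lemma inf_self (x : X) : qinf x x = x := by
  show imp (imp (imp (imp x zero) (imp x zero)) (imp x zero)) zero = x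
  rw [imp_self (imp x zero), one_imp (imp x zero), involutive x]

lemma inf_one (x : X) : qinf x one = x := by
  show imp (imp (imp (imp x zero) (imp one zero)) (imp one zero)) zero = x
  rw [one_imp (zero : X), involutive (imp x zero), involutive x]

lemma one_inf (x : X) : qinf one x = x := by
  show imp (imp (imp (imp one zero) (imp x zero)) (imp x zero)) zero = x
  rw [one_imp (zero : X), zero_imp (imp x zero), one_imp (imp x zero), involutive x]

lemma inf_zero (x : X) : qinf x zero = zero := by
  show imp (imp (imp (imp x zero) (imp zero zero)) (imp zero zero)) zero = zero
  rw [imp_self (zero : X), imp_one (imp x zero), imp_one (one : X), one_imp (zero : X)]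

lemma zero_inf (x : X) : qinf zero x = zero := by
  show imp (imp (imp (imp zero zero) (imp x zero)) (imp x zero)) zero = zero
  rw [imp_self (zero : X), one_imp (imp x zero), imp_self (imp x zero), one_imp (zero : X)]

/-- The key consequence of axiom (QW): `x* = x* ⊓ (x→w)`. -/
lemma lemC (x w : X) : imp x zero = qinf (imp x zero) (imp x w) := by
  have h := QW.qw x zero w
  rw [inf_zero x, zero_inf (qinf w x)] at h
  exact h

/-- Unfolded form of `lemC`. -/
lemma lemC' (x w : X) : imp x zero =
    imp (imp (imp (imp (imp x zero) zero) (imp (imp x w) zero)) (imp (imp x w) zero)) zero :=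
  lemC x w

lemma lemCfam (z v : X) : z = qinf z (imp v z) := by
  have h := lemC' (imp z zero) (imp v zero)
  rw [involutive z] at h
  rw [← contrap v z] at h
  exact h

lemma abs2 (s D : X) :
    imp (imp s (imp (imp s D) zero)) (imp (imp s D) zero) = s := by
  have h := lemC' s D
  rw [involutive s] at h
  have h2 := congrArg (fun t => imp t zero) h
  rw [involutive s,
    involutive (imp (imp s (imp (imp s D) zero)) (imp (imp s D) zero))] at h2
  exact h2.symm

lemma star_eq {x l : X} (h : x = qinf x l) :
    imp x zero = imp (imp l x) (imp l zero) := by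
  conv_lhs => rw [h]
  show imp (imp (imp (imp (imp x zero) (imp l zero)) (imp l zero)) zero) zero = _
  rw [involutive (imp (imp (imp x zero) (imp l zero)) (imp l zero))]
  rw [← contrap l x]

lemma S1 {z m : X} (h : z = qinf z m) : imp (imp m z) z = m := by
  have hz := star_eq h
  have hC := lemC m (imp (imp m z) zero)
  rw [exchange m (imp m z) zero] at hC
  rw [← hz] at hC
  have h3 : imp m zero = imp (imp (imp m z) z) zero := by
    rw [hC]
    show imp (imp (imp (imp (imp m zero) zero) (imp (imp z zero) zero))
      (imp (imp z zero) zero)) zero = _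
    rw [involutive m, involutive z]
  have h4 := congrArg (fun t => imp t zero) h3
  rw [involutive m, involutive (imp (imp m z) z)] at h4
  exact h4.symm

lemma S2 {z m : X} (h : imp (imp m z) z = m) : z = qinf z m := by
  have g := lemCfam z (imp m z)
  rwa [h] at g

lemma GEN (z v w : X) : z = qinf z (imp (imp v z) (imp w z)) := by
  rw [contrap v z, contrap w z]
  rw [exchange (imp (imp z zero) (imp v zero)) (imp z zero) (imp w zero)]
  show z = imp (imp (imp (imp z zero)
      (imp (imp (imp z zero) (imp (imp (imp z zero) (imp v zero)) (imp w zero))) zero))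
      (imp (imp (imp z zero) (imp (imp (imp z zero) (imp v zero)) (imp w zero))) zero)) zero
  rw [abs2 (imp z zero) (imp (imp (imp z zero) (imp v zero)) (imp w zero)), involutive z]

lemma Q1 {z m : X} (h : z = qinf z m) (w : X) : z = qinf z (imp w m) := by
  have e := S1 h
  have h2 : imp w m = imp (imp m z) (imp w z) := by
    conv_lhs => rw [← e]
    exact exchange w (imp m z) z
  have g := GEN z m w
  rwa [← h2] at g

lemma Q4 {x y z : X} (hxy : x = qinf x y) (hyz : y = qinf y z) : x = qinf x z := by
  have e := S1 hyz
  have g := Q1 hxy (imp z y)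
  rwa [e] at g

lemma Q2 {u m : X} (h : u = qinf u m) (x : X) :
    imp x u = qinf (imp x u) (imp x m) := by
  have e := S1 h
  have step := lemC (imp (imp x u) zero) (imp (imp m u) zero)
  rw [involutive (imp x u)] at step
  rw [← contrap (imp m u) (imp x u)] at step
  rw [exchange (imp m u) x u] at step
  rw [e] at step
  exact step

lemma EQ7 {x l : X} (h : x = qinf x l) (w : X) :
    imp x w = imp (imp l x) (imp l w) := by
  have hx := star_eq h
  calc imp x w = imp (imp w zero) (imp x zero) := contrap x w
    _ = imp (imp w zero) (imp (imp l x) (imp l zero)) := by rw [hx]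
    _ = imp (imp l x) (imp (imp w zero) (imp l zero)) := exchange _ _ _
    _ = imp (imp l x) (imp l w) := by rw [← contrap l w]

lemma Q3inf {y l : X} (h : y = qinf y l) (s : X) :
    imp l s = qinf (imp l s) (imp y s) := by
  have g := lemCfam (imp l s) (imp l y)
  rwa [← EQ7 h s] at g

end QWAux

open PreQW
/-- Theorem 4.8: correspondence between deductive systems and congruences. -/
theorem qw_thm_4_8 {X : Type*} [QW X] :
    (∀ F : Set X, IsDS F →
      (Equivalence (equivF F) ∧
        (∀ x y u v : X, equivF F x y → equivF F u v →
          equivF F (imp x u) (imp y v)) ∧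
        {x : X | equivF F x one} = F)) ∧
    (∀ r : X → X → Prop, Equivalence r →
      (∀ x y u v : X, r x y → r u v → r (imp x u) (imp y v)) →
      IsDS {x : X | r x one}) := by
  constructor
  · intro F hF
    obtain ⟨h1F, hMP⟩ := hF
    have mem1 : ∀ t : X, t = one → t ∈ F := fun t ht => ht ▸ h1F
    -- reflexivity
    have hrefl : ∀ x : X, equivF F x x := fun x =>
      ⟨x, (QWAux.inf_self x).symm, (QWAux.inf_self x).symm,
        mem1 _ (imp_self x), mem1 _ (imp_self x)⟩
    -- symmetry
    have hsymm : ∀ {x y : X}, equivF F x y → equivF F y x := by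
      rintro x y ⟨l, h1, h2, h3, h4⟩; exact ⟨l, h2, h1, h4, h3⟩
    -- transitivity
    have htrans : ∀ {x y z : X}, equivF F x y → equivF F y z → equivF F x z := by
      rintro x y z ⟨l, hxl, hyl, hlx, hly⟩ ⟨m, hym, hzm, hmy, hmz⟩
      have e1 : imp (imp l y) y = l := QWAux.S1 hyl
      have e3 : imp (imp m y) y = m := QWAux.S1 hym
      have e4 : imp (imp l x) x = l := QWAux.S1 hxl
      have e5 : imp (imp m z) z = m := QWAux.S1 hzm
      refine ⟨imp (imp l y) m, ?_, ?_, ?_, ?_⟩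
      · -- x ≤Q ν
        have e2 := QWAux.Q2 hym (imp l y)
        rw [e1] at e2
        exact QWAux.Q4 hxl e2
      · -- z ≤Q ν
        exact QWAux.Q1 hzm (imp l y)
      · -- ν → x ∈ F
        have hnu : imp (imp l y) m = imp (imp m y) l := by
          conv_lhs => rw [← e3]
          rw [exchange (imp l y) (imp m y) y, e1]
        have hid : imp (imp l x) (imp (imp m y) (imp (imp (imp l y) m) x)) = one := by
          rw [hnu]
          rw [exchange (imp l x) (imp m y) (imp (imp (imp m y) l) x)]
          rw [exchange (imp l x) (imp (imp m y) l) x]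
          rw [e4]
          rw [exchange (imp m y) (imp (imp m y) l) l]
          rw [imp_self (imp (imp m y) l)]
        have m1 : imp (imp l x) (imp (imp m y) (imp (imp (imp l y) m) x)) ∈ F := by
          rw [hid]; exact h1F
        exact hMP _ hmy _ (hMP _ hlx _ m1)
      · -- ν → z ∈ F
        have hid : imp (imp l y) (imp (imp m z) (imp (imp (imp l y) m) z)) = one := by
          rw [exchange (imp m z) (imp (imp l y) m) z]
          rw [e5]
          rw [exchange (imp l y) (imp (imp l y) m) m]
          rw [imp_self (imp (imp l y) m)]
        have m1 : imp (imp l y) (imp (imp m z) (imp (imp (imp l y) m) z)) ∈ F := by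
          rw [hid]; exact h1F
        exact hMP _ hmz _ (hMP _ hly _ m1)
    -- right compatibility
    have hRC : ∀ {x y u l : X}, qleQ x l → qleQ y l → imp l x ∈ F → imp l y ∈ F →
        equivF F (imp x u) (imp y u) := by
      intro x y u l hxl hyl hlx hly
      have e7 : imp x u = imp l (imp (imp l x) u) :=
        (QWAux.EQ7 hxl u).trans (exchange (imp l x) l u)
      have e8 : imp (imp l x) (imp y u) = imp y (imp (imp l x) u) := exchange _ _ _
      refine ⟨imp (imp l x) (imp y u), ?_, ?_, ?_, ?_⟩
      · have g := QWAux.Q3inf hyl (imp (imp l x) u)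
        rw [← e7] at g
        rw [← e8] at g
        exact g
      · exact QWAux.lemCfam (imp y u) (imp l x)
      · -- ν → (x→u) ∈ F
        have e9 : imp y (imp (imp l x) u) =
            imp (imp l y) (imp l (imp (imp l x) u)) := QWAux.EQ7 hyl _
        have hid : imp (imp l y) (imp (imp (imp l x) (imp y u)) (imp x u)) = one := by
          rw [e7, e8, e9]
          rw [exchange (imp l y) (imp (imp l y) (imp l (imp (imp l x) u)))
            (imp l (imp (imp l x) u))]
          rw [imp_self (imp (imp l y) (imp l (imp (imp l x) u)))]
        have m1 : imp (imp l y) (imp (imp (imp l x) (imp y u)) (imp x u)) ∈ F := by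
          rw [hid]; exact h1F
        exact hMP _ hly _ m1
      · -- ν → (y→u) ∈ F
        have hid : imp (imp l x) (imp (imp (imp l x) (imp y u)) (imp y u)) = one := by
          rw [exchange (imp l x) (imp (imp l x) (imp y u)) (imp y u)]
          rw [imp_self (imp (imp l x) (imp y u))]
        have m1 : imp (imp l x) (imp (imp (imp l x) (imp y u)) (imp y u)) ∈ F := by
          rw [hid]; exact h1F
        exact hMP _ hlx _ m1
    -- left compatibility
    have hLC : ∀ {u v y m : X}, qleQ u m → qleQ v m → imp m u ∈ F → imp m v ∈ F →
        equivF F (imp y u) (imp y v) := by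
      intro u v y m hum hvm hmu hmv
      have eu : imp (imp m u) u = m := QWAux.S1 hum
      have ev : imp (imp m v) v = m := QWAux.S1 hvm
      refine ⟨imp y m, QWAux.Q2 hum y, QWAux.Q2 hvm y, ?_, ?_⟩
      · have hym2 : imp y m = imp (imp m u) (imp y u) := by
          conv_lhs => rw [← eu]
          exact exchange y (imp m u) u
        have hid : imp (imp m u) (imp (imp y m) (imp y u)) = one := by
          rw [hym2]
          rw [exchange (imp m u) (imp (imp m u) (imp y u)) (imp y u)]
          rw [imp_self (imp (imp m u) (imp y u))]
        have m1 : imp (imp m u) (imp (imp y m) (imp y u)) ∈ F := by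
          rw [hid]; exact h1F
        exact hMP _ hmu _ m1
      · have hym2 : imp y m = imp (imp m v) (imp y v) := by
          conv_lhs => rw [← ev]
          exact exchange y (imp m v) v
        have hid : imp (imp m v) (imp (imp y m) (imp y v)) = one := by
          rw [hym2]
          rw [exchange (imp m v) (imp (imp m v) (imp y v)) (imp y v)]
          rw [imp_self (imp (imp m v) (imp y v))]
        have m1 : imp (imp m v) (imp (imp y m) (imp y v)) ∈ F := by
          rw [hid]; exact h1F
        exact hMP _ hmv _ m1
    refine ⟨⟨hrefl, fun h => hsymm h, fun h h' => htrans h h'⟩, ?_, ?_⟩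
    · rintro x y u v ⟨l, hxl, hyl, hlx, hly⟩ ⟨m, hum, hvm, hmu, hmv⟩
      exact htrans (hRC hxl hyl hlx hly) (hLC hum hvm hmu hmv)
    · ext x
      simp only [Set.mem_setOf_eq]
      constructor
      · rintro ⟨l, hxl, h1l, hlx, -⟩
        have h1l' : (one : X) = qinf one l := h1l
        have hl : l = one := (h1l'.trans (QWAux.one_inf l)).symm
        rw [hl] at hlx
        rw [one_imp x] at hlx
        exact hlx
      · intro hx
        exact ⟨one, (QWAux.inf_one x).symm, (QWAux.inf_self one).symm,
          by rw [one_imp x]; exact hx, by rw [imp_one one]; exact h1F⟩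
  · intro r hr hcong
    refine ⟨hr.refl one, ?_⟩
    intro x hx y hxy
    have c1 := hcong x one y y hx (hr.refl y)
    rw [one_imp y] at c1
    exact hr.trans (hr.symm c1) hxy
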